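/- Let R = R₀ ⊕ R₁ be a Z₂-graded commutative ring. Then the Z₂-graded maximal ideals of R are exactly the ideals p + R₁, where p is a maximal ideal of R₀ containing R₁², together with the ideals p + p·R₁, where p is a maximal ideal of R₀ not containing R₁². -/
import Mathlib


/-- A `ℤ/2ℤ`-grading on a commutative ring `R`: additive subgroups `R0`, `R1` with
`R = R0 ⊕ R1` (internal direct sum) and `Rᵢ · Rⱼ ⊆ R_{i+j}`. -/
structure Z2Grading (R : Type*) [CommRing R] where
  R0 : AddSubgroup R
  R1 : AddSubgroup R
  one_mem : (1 : R) ∈ R0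
  mul_mem_00 : ∀ {a b : R}, a ∈ R0 → b ∈ R0 → a * b ∈ R0
  mul_mem_01 : ∀ {a b : R}, a ∈ R0 → b ∈ R1 → a * b ∈ R1
  mul_mem_11 : ∀ {a b : R}, a ∈ R1 → b ∈ R1 → a * b ∈ R0
  sup_eq_top : R0 ⊔ R1 = ⊤
  inf_eq_bot : R0 ⊓ R1 = ⊥

/-- The sum `S + T` of two subsets of `R`. -/
def setSum {R : Type*} [CommRing R] (S T : Set R) : Set R :=
  {z : R | ∃ a ∈ S, ∃ b ∈ T, z = a + b}

/-- The additive subgroup of `R` generated by the pairwise products of `S` and `T`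
(i.e. the product `S·T` of an ideal/submodule pair). -/
def mulSet {R : Type*} [CommRing R] (S T : Set R) : AddSubgroup R :=
  AddSubgroup.closure {x : R | ∃ a ∈ S, ∃ b ∈ T, x = a * b}

namespace Z2Grading

variable {R : Type*} [CommRing R] (G : Z2Grading R)

/-- The set of homogeneous elements of `R`, namely `R₀ ∪ R₁`. -/
def homogeneous : Set R := ↑G.R0 ∪ ↑G.R1

/-- `R₁²`, the ideal of `R₀` generated by the products of two elements of `R₁`. -/
def sq : AddSubgroup R := mulSet (↑G.R1) (↑G.R1)

/-- `R₁³ = R₁² · R₁`, an `R₀`-submodule of `R₁`. -/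
def cube : AddSubgroup R := mulSet (↑G.sq) (↑G.R1)

/-- `I` is an ideal of the subring `R₀` (viewed inside `R`). -/
def IsIdeal0 (I : AddSubgroup R) : Prop :=
  (I : Set R) ⊆ ↑G.R0 ∧ ∀ a ∈ G.R0, ∀ x ∈ I, a * x ∈ I

/-- `N` is an `R₀`-submodule of `R₁` (viewed inside `R`). -/
def IsSubmodule1 (N : AddSubgroup R) : Prop :=
  (N : Set R) ⊆ ↑G.R1 ∧ ∀ a ∈ G.R0, ∀ x ∈ N, a * x ∈ N

/-- The residual `(N :_{R₀} R₁) = {a ∈ R₀ : a·R₁ ⊆ N}`. -/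
def residual (N : AddSubgroup R) : AddSubgroup R where
  carrier := {a : R | a ∈ G.R0 ∧ ∀ r ∈ G.R1, a * r ∈ N}
  zero_mem' := ⟨G.R0.zero_mem, fun r _ => by simpa using N.zero_mem⟩
  add_mem' := by
    rintro a b ⟨ha0, ha⟩ ⟨hb0, hb⟩
    exact ⟨G.R0.add_mem ha0 hb0, fun r hr => by
      rw [add_mul]; exact N.add_mem (ha r hr) (hb r hr)⟩
  neg_mem' := by
    rintro a ⟨ha0, ha⟩
    exact ⟨G.R0.neg_mem ha0, fun r hr => by
      rw [neg_mul]; exact N.neg_mem (ha r hr)⟩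

/-- `J` is a `ℤ₂`-graded ideal of `R`: the homogeneous components of each of its
elements again belong to `J`, i.e. `J = (J ∩ R₀) ⊕ (J ∩ R₁)`. -/
def IsGradedIdeal (J : Ideal R) : Prop :=
  ∀ x ∈ J, ∃ a b : R, a ∈ G.R0 ∧ b ∈ G.R1 ∧ a ∈ J ∧ b ∈ J ∧ x = a + b

/-- `J` is a `ℤ₂`-graded prime ideal of `R`. -/
def IsGradedPrime (J : Ideal R) : Prop :=
  G.IsGradedIdeal J ∧ J ≠ ⊤ ∧
    ∀ r ∈ G.homogeneous, ∀ s ∈ G.homogeneous, r * s ∈ J → r ∈ J ∨ s ∈ J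

/-- `J` is a `ℤ₂`-graded maximal ideal of `R`. -/
def IsGradedMaximal (J : Ideal R) : Prop :=
  G.IsGradedIdeal J ∧ J ≠ ⊤ ∧
    ∀ J' : Ideal R, G.IsGradedIdeal J' → J ≤ J' → J' = J ∨ J' = ⊤

/-- `p` is a prime ideal of the subring `R₀`. -/
def IsPrime0 (p : AddSubgroup R) : Prop :=
  G.IsIdeal0 p ∧ (p : Set R) ≠ ↑G.R0 ∧
    ∀ a ∈ G.R0, ∀ b ∈ G.R0, a * b ∈ p → a ∈ p ∨ b ∈ p

/-- `p` is a maximal ideal of the subring `R₀`. -/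
def IsMaximal0 (p : AddSubgroup R) : Prop :=
  G.IsIdeal0 p ∧ (p : Set R) ≠ ↑G.R0 ∧
    ∀ I : AddSubgroup R, G.IsIdeal0 I → p ≤ I → (I : Set R) = ↑p ∨ (I : Set R) = ↑G.R0

/-- `N` is a prime `R₀`-submodule of `R₁`. -/
def IsPrimeSubmodule1 (N : AddSubgroup R) : Prop :=
  G.IsSubmodule1 N ∧ (N : Set R) ≠ ↑G.R1 ∧
    ∀ a ∈ G.R0, ∀ m ∈ G.R1, a * m ∈ N → a ∈ G.residual N ∨ m ∈ N

/-- `N` is a maximal (proper) `R₀`-submodule of `R₁`. -/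
def IsMaximalSubmodule1 (N : AddSubgroup R) : Prop :=
  G.IsSubmodule1 N ∧ (N : Set R) ≠ ↑G.R1 ∧
    ∀ N' : AddSubgroup R, G.IsSubmodule1 N' → N ≤ N' →
      (N' : Set R) = ↑N ∨ (N' : Set R) = ↑G.R1

/-- `R` is a `ℤ₂`-graded integral domain. -/
def IsGradedDomain : Prop :=
  (1 : R) ≠ 0 ∧
    ∀ r ∈ G.homogeneous, ∀ s ∈ G.homogeneous, r * s = 0 → r = 0 ∨ s = 0

/-- `R` is a `ℤ₂`-graded field. -/
def IsGradedField : Prop :=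
  (1 : R) ≠ 0 ∧ ∀ r ∈ G.homogeneous, r ≠ 0 → IsUnit r

/-- `R₀` as a subring of `R`. -/
def toSubring : Subring R where
  carrier := ↑G.R0
  one_mem' := G.one_mem
  mul_mem' := fun ha hb => G.mul_mem_00 ha hb
  zero_mem' := G.R0.zero_mem
  add_mem' := fun ha hb => G.R0.add_mem ha hb
  neg_mem' := fun ha => G.R0.neg_mem ha

/-- The Zariski topology on the homogeneous spectrum `Z₂Spec R`: closed sets are the
`V(I) = {P : I ⊆ P}` for `ℤ₂`-graded ideals `I`. -/
def gradedZariski : TopologicalSpace {Q : Ideal R // G.IsGradedPrime Q} :=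
  TopologicalSpace.generateFrom
    {U : Set {Q : Ideal R // G.IsGradedPrime Q} |
      ∃ I : Ideal R, G.IsGradedIdeal I ∧ U = {P | ¬ I ≤ P.1}}

end Z2Grading

namespace Z2Grading

section Helpers

variable {R : Type*} [CommRing R] (G : Z2Grading R)

lemma decompose (x : R) : ∃ a ∈ G.R0, ∃ b ∈ G.R1, x = a + b := by
  have hx : x ∈ G.R0 ⊔ G.R1 := by rw [G.sup_eq_top]; exact AddSubgroup.mem_top x
  obtain ⟨a, ha, b, hb, h⟩ := AddSubgroup.mem_sup.1 hx
  exact ⟨a, ha, b, hb, h.symm⟩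

lemma decomp_unique {a b a' b' : R} (ha : a ∈ G.R0) (hb : b ∈ G.R1)
    (ha' : a' ∈ G.R0) (hb' : b' ∈ G.R1) (h : a + b = a' + b') : a = a' ∧ b = b' := by
  have h0 : a - a' ∈ G.R0 := sub_mem ha ha'
  have heq : a - a' = b' - b := by linear_combination h
  have h1 : a - a' ∈ G.R1 := heq ▸ sub_mem hb' hb
  have : a - a' ∈ G.R0 ⊓ G.R1 := AddSubgroup.mem_inf.2 ⟨h0, h1⟩
  rw [G.inf_eq_bot, AddSubgroup.mem_bot, sub_eq_zero] at this
  rw [this] at h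
  exact ⟨this, add_left_cancel h⟩

lemma mem_mulSet_of {S T : Set R} {a b : R} (ha : a ∈ S) (hb : b ∈ T) :
    a * b ∈ mulSet S T :=
  AddSubgroup.subset_closure ⟨a, ha, b, hb, rfl⟩

lemma mulSet_le {S T : Set R} {H : AddSubgroup R} (h : ∀ a ∈ S, ∀ b ∈ T, a * b ∈ H) :
    mulSet S T ≤ H :=
  (AddSubgroup.closure_le H).2 (by rintro x ⟨a, ha, b, hb, rfl⟩; exact h a ha b hb)

lemma mul_mulSet_mem {S T : Set R} {H : AddSubgroup R} {c : R}
    (h : ∀ a ∈ S, ∀ b ∈ T, c * (a * b) ∈ H) : ∀ x ∈ mulSet S T, c * x ∈ H := by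
  intro x hx
  have hle : mulSet S T ≤ H.comap (AddMonoidHom.mulLeft c) :=
    (AddSubgroup.closure_le _).2 (by rintro y ⟨a, ha, b, hb, rfl⟩; exact h a ha b hb)
  exact hle hx

/-- Build an ideal of `R` from graded components. -/
def mkIdeal (p N : AddSubgroup R)
    (hp0 : (p : Set R) ⊆ ↑G.R0) (hN1 : (N : Set R) ⊆ ↑G.R1)
    (h0p : ∀ a ∈ G.R0, ∀ x ∈ p, a * x ∈ p)
    (h0N : ∀ a ∈ G.R0, ∀ x ∈ N, a * x ∈ N)
    (h1p : ∀ a ∈ G.R1, ∀ x ∈ p, a * x ∈ N)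
    (h1N : ∀ a ∈ G.R1, ∀ x ∈ N, a * x ∈ p) : Ideal R where
  carrier := setSum ↑p ↑N
  zero_mem' := ⟨0, p.zero_mem, 0, N.zero_mem, by ring⟩
  add_mem' := by
    rintro x y ⟨a, ha, b, hb, rfl⟩ ⟨c, hc, d, hd, rfl⟩
    exact ⟨a + c, p.add_mem ha hc, b + d, N.add_mem hb hd, by ring⟩
  smul_mem' := by
    intro c x hx
    obtain ⟨a, ha, b, hb, rfl⟩ := hx
    obtain ⟨c0, hc0, c1, hc1, rfl⟩ := G.decompose c
    refine ⟨c0 * a + c1 * b, p.add_mem (h0p c0 hc0 a ha) (h1N c1 hc1 b hb),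
      c0 * b + c1 * a, N.add_mem (h0N c0 hc0 b hb) (h1p c1 hc1 a ha), ?_⟩
    simp only [smul_eq_mul]; ring

lemma mem_mkIdeal {p N : AddSubgroup R} {hp0 hN1 h0p h0N h1p h1N} {x : R} :
    x ∈ G.mkIdeal p N hp0 hN1 h0p h0N h1p h1N ↔ ∃ a ∈ p, ∃ b ∈ N, x = a + b :=
  Iff.rfl

lemma mkIdeal_coe {p N : AddSubgroup R} {hp0 hN1 h0p h0N h1p h1N} :
    (G.mkIdeal p N hp0 hN1 h0p h0N h1p h1N : Set R) = setSum ↑p ↑N := rfl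

lemma mkIdeal_graded {p N : AddSubgroup R} {hp0 hN1 h0p h0N h1p h1N} :
    G.IsGradedIdeal (G.mkIdeal p N hp0 hN1 h0p h0N h1p h1N) := by
  rintro x ⟨a, ha, b, hb, rfl⟩
  exact ⟨a, b, hp0 ha, hN1 hb, ⟨a, ha, 0, N.zero_mem, by ring⟩,
    ⟨0, p.zero_mem, b, hb, by ring⟩, rfl⟩

lemma one_not_mem {p : AddSubgroup R} (hI : G.IsIdeal0 p)
    (hne : (p : Set R) ≠ ↑G.R0) : (1 : R) ∉ p := by
  intro h1
  apply hne
  refine Set.Subset.antisymm hI.1 (fun a ha => ?_)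
  simpa using hI.2 a ha 1 h1

lemma exists_prod_not_mem {p : AddSubgroup R} (h : ¬ (G.sq : Set R) ⊆ ↑p) :
    ∃ s ∈ G.R1, ∃ t ∈ G.R1, s * t ∉ p := by
  by_contra hc
  push_neg at hc
  exact h (fun x hx => mulSet_le (fun a ha b hb => hc a ha b hb) hx)

/-- `{c ∈ R₀ : c·b ∈ N}`. -/
def residualTo (N : AddSubgroup R) (b : R) : AddSubgroup R where
  carrier := {c : R | c ∈ G.R0 ∧ c * b ∈ N}
  zero_mem' := ⟨G.R0.zero_mem, by simpa using N.zero_mem⟩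
  add_mem' := by
    rintro c d ⟨hc0, hc⟩ ⟨hd0, hd⟩
    exact ⟨G.R0.add_mem hc0 hd0, by rw [add_mul]; exact N.add_mem hc hd⟩
  neg_mem' := by
    rintro c ⟨hc0, hc⟩
    exact ⟨G.R0.neg_mem hc0, by rw [neg_mul]; exact N.neg_mem hc⟩

lemma mem_residualTo {N : AddSubgroup R} {b c : R} :
    c ∈ G.residualTo N b ↔ c ∈ G.R0 ∧ c * b ∈ N := Iff.rfl

lemma gradedMaximal_of_case1 {p : AddSubgroup R} (Q : Ideal R)
    (hmax : G.IsMaximal0 p) (hsq : (G.sq : Set R) ⊆ ↑p)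
    (hQ : (Q : Set R) = setSum ↑p ↑G.R1) : G.IsGradedMaximal Q := by
  obtain ⟨⟨hp0, hpmul⟩, hpne, hpmax⟩ := hmax
  have h1p : (1 : R) ∉ p := G.one_not_mem ⟨hp0, hpmul⟩ hpne
  have memQ : ∀ {x : R}, x ∈ Q ↔ x ∈ setSum (↑p) (↑G.R1 : Set R) := by
    intro x; rw [← SetLike.mem_coe, hQ]
  refine ⟨?_, ?_, ?_⟩
  · intro x hx
    obtain ⟨a, ha, b, hb, rfl⟩ := memQ.1 hx
    exact ⟨a, b, hp0 ha, hb, memQ.2 ⟨a, ha, 0, G.R1.zero_mem, by ring⟩,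
      memQ.2 ⟨0, p.zero_mem, b, hb, by ring⟩, rfl⟩
  · intro htop
    have h1 : (1 : R) ∈ Q := by rw [htop]; exact Submodule.mem_top
    obtain ⟨a, ha, b, hb, hab⟩ := memQ.1 h1
    have := (G.decomp_unique (hp0 ha) hb G.one_mem G.R1.zero_mem
      (by rw [add_zero]; exact hab.symm)).1
    exact h1p (this ▸ ha)
  · intro J' hJ' hle
    by_cases hc : ∃ x, x ∈ J' ∧ x ∈ G.R0 ∧ x ∉ p
    · obtain ⟨x, hxJ, hx0, hxp⟩ := hc
      set p' : AddSubgroup R := J'.toAddSubgroup ⊓ G.R0 with hp'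
      have hp'def : ∀ {y : R}, y ∈ p' ↔ y ∈ J' ∧ y ∈ G.R0 := fun {y} => AddSubgroup.mem_inf
      have hI' : G.IsIdeal0 p' := ⟨fun y hy => (hp'def.1 hy).2, fun a ha y hy =>
        hp'def.2 ⟨Ideal.mul_mem_left _ a (hp'def.1 hy).1, G.mul_mem_00 ha (hp'def.1 hy).2⟩⟩
      have hple : p ≤ p' := fun y hy =>
        hp'def.2 ⟨hle (memQ.2 ⟨y, hy, 0, G.R1.zero_mem, by ring⟩), hp0 hy⟩
      rcases hpmax p' hI' hple with h | h
      · exact absurd (show x ∈ (p : Set R) from h ▸ (SetLike.mem_coe.2 (hp'def.2 ⟨hxJ, hx0⟩))) hxp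
      · right
        rw [Ideal.eq_top_iff_one]
        have h1' : (1 : R) ∈ (p' : Set R) := by rw [h]; exact G.one_mem
        exact (hp'def.1 h1').1
    · left
      push_neg at hc
      refine le_antisymm (fun y hy => ?_) hle
      obtain ⟨a, b, ha0, hb1, haJ, hbJ, rfl⟩ := hJ' y hy
      exact memQ.2 ⟨a, hc a haJ ha0, b, hb1, rfl⟩

lemma gradedMaximal_of_case2 {p : AddSubgroup R} (Q : Ideal R)
    (hmax : G.IsMaximal0 p) (hsq : ¬ (G.sq : Set R) ⊆ ↑p)
    (hQ : (Q : Set R) = setSum ↑p (mulSet (p : Set R) (G.R1 : Set R) : Set R)) :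
    G.IsGradedMaximal Q := by
  obtain ⟨⟨hp0, hpmul⟩, hpne, hpmax⟩ := hmax
  obtain ⟨s, hs, t, ht, hst⟩ := G.exists_prod_not_mem hsq
  set N : AddSubgroup R := mulSet (p : Set R) (G.R1 : Set R) with hNdef
  have hN1 : (N : Set R) ⊆ ↑G.R1 :=
    fun x hx => mulSet_le (fun a ha b hb => G.mul_mem_01 (hp0 ha) hb) hx
  have h1p : (1 : R) ∉ p := G.one_not_mem ⟨hp0, hpmul⟩ hpne
  have memQ : ∀ {x : R}, x ∈ Q ↔ x ∈ setSum (↑p) ((N : Set R)) := by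
    intro x; rw [← SetLike.mem_coe, hQ]
  refine ⟨?_, ?_, ?_⟩
  · intro x hx
    obtain ⟨a, ha, b, hb, rfl⟩ := memQ.1 hx
    exact ⟨a, b, hp0 ha, hN1 hb, memQ.2 ⟨a, ha, 0, N.zero_mem, by ring⟩,
      memQ.2 ⟨0, p.zero_mem, b, hb, by ring⟩, rfl⟩
  · intro htop
    have h1 : (1 : R) ∈ Q := by rw [htop]; exact Submodule.mem_top
    obtain ⟨a, ha, b, hb, hab⟩ := memQ.1 h1
    have := (G.decomp_unique (hp0 ha) (hN1 hb) G.one_mem G.R1.zero_mem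
      (by rw [add_zero]; exact hab.symm)).1
    exact h1p (this ▸ ha)
  · intro J' hJ' hle
    set p' : AddSubgroup R := J'.toAddSubgroup ⊓ G.R0 with hp'
    have hp'def : ∀ {y : R}, y ∈ p' ↔ y ∈ J' ∧ y ∈ G.R0 := fun {y} => AddSubgroup.mem_inf
    have hI' : G.IsIdeal0 p' := ⟨fun y hy => (hp'def.1 hy).2, fun a ha y hy =>
      hp'def.2 ⟨Ideal.mul_mem_left _ a (hp'def.1 hy).1, G.mul_mem_00 ha (hp'def.1 hy).2⟩⟩
    have hple : p ≤ p' := fun y hy =>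
      hp'def.2 ⟨hle (memQ.2 ⟨y, hy, 0, N.zero_mem, by ring⟩), hp0 hy⟩
    rcases hpmax p' hI' hple with h | h
    · left
      refine le_antisymm (fun y hy => ?_) hle
      obtain ⟨a, b, ha0, hb1, haJ, hbJ, rfl⟩ := hJ' y hy
      have hap : a ∈ p := by
        have : a ∈ (p' : Set R) := hp'def.2 ⟨haJ, ha0⟩
        rw [h] at this; exact this
      have hbN : b ∈ N := by
        set Ib : AddSubgroup R := G.residualTo N b with hIbdef
        have hIbIdeal : G.IsIdeal0 Ib := by
          refine ⟨fun c hc => hc.1, fun a' ha' c hc => ⟨G.mul_mem_00 ha' hc.1, ?_⟩⟩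
          have hm : a' * (c * b) ∈ N := mul_mulSet_mem (fun u hu v hv => by
            have he : a' * (u * v) = (a' * u) * v := by ring
            rw [he]
            exact mem_mulSet_of (SetLike.mem_coe.2 (hpmul a' ha' u hu)) hv) _ hc.2
          rw [← mul_assoc] at hm
          exact hm
        have hpIb : p ≤ Ib := fun c hc => ⟨hp0 hc, mem_mulSet_of hc hb1⟩
        have hstIb : s * t ∈ Ib := by
          have htb : t * b ∈ p := by
            have h1' : t * b ∈ J' := Ideal.mul_mem_left _ t hbJ
            have h2' : t * b ∈ G.R0 := G.mul_mem_11 ht hb1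
            have hm : t * b ∈ (p' : Set R) := hp'def.2 ⟨h1', h2'⟩
            rw [h] at hm; exact hm
          refine ⟨G.mul_mem_11 hs ht, ?_⟩
          have hm : (t * b) * s ∈ N := mem_mulSet_of htb hs
          have he : s * t * b = (t * b) * s := by ring
          rw [he]
          exact hm
        rcases hpmax Ib hIbIdeal hpIb with h' | h'
        · exact absurd (show s * t ∈ (p : Set R) from h' ▸ SetLike.mem_coe.2 hstIb) hst
        · have h1Ib : (1 : R) ∈ (Ib : Set R) := by rw [h']; exact G.one_mem
          have := (SetLike.mem_coe.1 h1Ib).2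
          rwa [one_mul] at this
      exact memQ.2 ⟨a, hap, b, hbN, rfl⟩
    · right
      rw [Ideal.eq_top_iff_one]
      have h1' : (1 : R) ∈ (p' : Set R) := by rw [h]; exact G.one_mem
      exact (hp'def.1 h1').1

end Helpers

end Z2Grading

/-- the `ℤ₂`-graded maximal ideals of `R` are exactly the ideals `p + R₁`
with `p` a maximal ideal of `R₀` containing `R₁²`, together with the ideals `p + p·R₁` with
`p` a maximal ideal of `R₀` not containing `R₁²`. -/
theorem graded_maximal_classification {R : Type*} [CommRing R] (G : Z2Grading R)
    (Q : Ideal R) :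
    G.IsGradedMaximal Q ↔
      (∃ p : AddSubgroup R, G.IsMaximal0 p ∧ (G.sq : Set R) ⊆ ↑p ∧
        (Q : Set R) = setSum ↑p ↑G.R1) ∨
      (∃ p : AddSubgroup R, G.IsMaximal0 p ∧ ¬ ((G.sq : Set R) ⊆ ↑p) ∧
        (Q : Set R) = setSum ↑p (mulSet (p : Set R) (G.R1 : Set R) : Set R)) := by
  constructor
  · rintro ⟨hgr, hne, hmaxQ⟩
    set p : AddSubgroup R := Q.toAddSubgroup ⊓ G.R0 with hpdef
    have hpmem : ∀ {y : R}, y ∈ p ↔ y ∈ Q ∧ y ∈ G.R0 := fun {y} => AddSubgroup.mem_inf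
    set N : AddSubgroup R := Q.toAddSubgroup ⊓ G.R1 with hNdef
    have hNmem : ∀ {y : R}, y ∈ N ↔ y ∈ Q ∧ y ∈ G.R1 := fun {y} => AddSubgroup.mem_inf
    have hp0 : (p : Set R) ⊆ ↑G.R0 := fun y hy => (hpmem.1 hy).2
    have hpmul : ∀ a ∈ G.R0, ∀ x ∈ p, a * x ∈ p := fun a ha x hx =>
      hpmem.2 ⟨Ideal.mul_mem_left _ a (hpmem.1 hx).1, G.mul_mem_00 ha (hpmem.1 hx).2⟩
    have hIp : G.IsIdeal0 p := ⟨hp0, hpmul⟩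
    have h1Q : (1 : R) ∉ Q := fun h => hne ((Ideal.eq_top_iff_one _).2 h)
    have hpne : (p : Set R) ≠ ↑G.R0 := by
      intro h
      have : (1 : R) ∈ (p : Set R) := by rw [h]; exact G.one_mem
      exact h1Q (hpmem.1 this).1
    -- maximality of p
    have hpmax : ∀ I : AddSubgroup R, G.IsIdeal0 I → p ≤ I →
        (I : Set R) = ↑p ∨ (I : Set R) = ↑G.R0 := by
      intro I hI hpI
      set N' : AddSubgroup R := mulSet (I : Set R) (G.R1 : Set R) ⊔ N with hN'def
      have hmul_le : mulSet (I : Set R) (G.R1 : Set R) ≤ N' := le_sup_left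
      have hN_le : N ≤ N' := le_sup_right
      have hN'1 : (N' : Set R) ⊆ ↑G.R1 := by
        have : N' ≤ G.R1 := sup_le
          (Z2Grading.mulSet_le (fun a ha b hb => G.mul_mem_01 (hI.1 ha) hb))
          (fun y hy => (hNmem.1 hy).2)
        exact fun y hy => this hy
      have h0N' : ∀ a ∈ G.R0, ∀ x ∈ N', a * x ∈ N' := by
        intro a ha x hx
        obtain ⟨y, hy, z, hz, hyz⟩ := AddSubgroup.mem_sup.1 hx
        have h1 : a * y ∈ N' := Z2Grading.mul_mulSet_mem (fun u hu v hv => by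
          have he : a * (u * v) = (a * u) * v := by ring
          rw [he]; exact hmul_le (Z2Grading.mem_mulSet_of (SetLike.mem_coe.2 (hI.2 a ha u hu)) hv)) y hy
        have h2 : a * z ∈ N' := hN_le (hNmem.2
          ⟨Ideal.mul_mem_left _ a (hNmem.1 hz).1, G.mul_mem_01 ha (hNmem.1 hz).2⟩)
        have : a * (y + z) ∈ N' := by rw [mul_add]; exact N'.add_mem h1 h2
        rwa [hyz] at this
      have h1I : ∀ a ∈ G.R1, ∀ x ∈ I, a * x ∈ N' := fun a ha x hx => by
        rw [mul_comm]; exact hmul_le (Z2Grading.mem_mulSet_of hx ha)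
      have h1N' : ∀ a ∈ G.R1, ∀ x ∈ N', a * x ∈ I := by
        intro a ha x hx
        obtain ⟨y, hy, z, hz, hyz⟩ := AddSubgroup.mem_sup.1 hx
        have h1 : a * y ∈ I := Z2Grading.mul_mulSet_mem (fun u hu v hv => by
          have he : a * (u * v) = (a * v) * u := by ring
          rw [he]; exact hI.2 _ (G.mul_mem_11 ha hv) u hu) y hy
        have h2 : a * z ∈ I := hpI (hpmem.2
          ⟨Ideal.mul_mem_left _ a (hNmem.1 hz).1, G.mul_mem_11 ha (hNmem.1 hz).2⟩)
        have : a * (y + z) ∈ I := by rw [mul_add]; exact I.add_mem h1 h2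
        rwa [hyz] at this
      set J := G.mkIdeal I N' hI.1 hN'1 hI.2 h0N' h1I h1N' with hJdef
      have hQJ : Q ≤ J := by
        intro x hx
        obtain ⟨a, b, ha0, hb1, haQ, hbQ, rfl⟩ := hgr x hx
        exact ⟨a, hpI (hpmem.2 ⟨haQ, ha0⟩), b, hN_le (hNmem.2 ⟨hbQ, hb1⟩), rfl⟩
      rcases hmaxQ J G.mkIdeal_graded hQJ with h | h
      · left
        refine Set.Subset.antisymm (fun y hy => ?_) (fun y hy => hpI hy)
        have hyJ : y ∈ J := ⟨y, hy, 0, N'.zero_mem, by ring⟩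
        rw [h] at hyJ
        exact hpmem.2 ⟨hyJ, hI.1 hy⟩
      · right
        have h1J : (1 : R) ∈ J := by rw [h]; exact Submodule.mem_top
        obtain ⟨a, ha, b, hb, hab⟩ := h1J
        have ha1 : a = 1 := (G.decomp_unique (hI.1 ha) (hN'1 hb) G.one_mem G.R1.zero_mem
          (by rw [add_zero]; exact hab.symm)).1
        have h1I' : (1 : R) ∈ I := ha1 ▸ ha
        refine Set.Subset.antisymm hI.1 (fun y hy => ?_)
        have := hI.2 y hy 1 h1I'
        rwa [mul_one] at this
    have hpm : G.IsMaximal0 p := ⟨hIp, hpne, hpmax⟩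
    by_cases hsq : (G.sq : Set R) ⊆ ↑p
    · left
      refine ⟨p, hpm, hsq, ?_⟩
      have h1pR1 : ∀ a ∈ G.R1, ∀ x ∈ p, a * x ∈ G.R1 := fun a ha x hx => by
        rw [mul_comm]; exact G.mul_mem_01 (hp0 hx) ha
      have h1N : ∀ a ∈ G.R1, ∀ x ∈ G.R1, a * x ∈ p := fun a ha x hx =>
        hsq (Z2Grading.mem_mulSet_of ha hx)
      set M := G.mkIdeal p G.R1 hp0 (fun x hx => hx) hpmul
        (fun a ha x hx => G.mul_mem_01 ha hx) h1pR1 h1N with hMdef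
      have hQM : Q ≤ M := by
        intro x hx
        obtain ⟨a, b, ha0, hb1, haQ, hbQ, rfl⟩ := hgr x hx
        exact ⟨a, hpmem.2 ⟨haQ, ha0⟩, b, hb1, rfl⟩
      rcases hmaxQ M G.mkIdeal_graded hQM with h | h
      · rw [← h]; rfl
      · exfalso
        have h1M : (1 : R) ∈ M := by rw [h]; exact Submodule.mem_top
        obtain ⟨a, ha, b, hb, hab⟩ := h1M
        have ha1 : a = 1 := (G.decomp_unique (hp0 ha) hb G.one_mem G.R1.zero_mem
          (by rw [add_zero]; exact hab.symm)).1
        exact G.one_not_mem hIp hpne (ha1 ▸ ha)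
    · right
      refine ⟨p, hpm, hsq, ?_⟩
      set Npr : AddSubgroup R := mulSet (p : Set R) (G.R1 : Set R) with hNprdef
      have hNpr1 : (Npr : Set R) ⊆ ↑G.R1 :=
        fun x hx => Z2Grading.mulSet_le (fun a ha b hb => G.mul_mem_01 (hp0 ha) hb) hx
      have h0Npr : ∀ a ∈ G.R0, ∀ x ∈ Npr, a * x ∈ Npr := fun a ha x hx =>
        Z2Grading.mul_mulSet_mem (fun u hu v hv => by
          have he : a * (u * v) = (a * u) * v := by ring
          rw [he]; exact Z2Grading.mem_mulSet_of (SetLike.mem_coe.2 (hpmul a ha u hu)) hv) x hx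
      have h1pr : ∀ a ∈ G.R1, ∀ x ∈ p, a * x ∈ Npr := fun a ha x hx => by
        rw [mul_comm]; exact Z2Grading.mem_mulSet_of hx ha
      have h1Npr : ∀ a ∈ G.R1, ∀ x ∈ Npr, a * x ∈ p := fun a ha x hx =>
        Z2Grading.mul_mulSet_mem (fun u hu v hv => by
          have he : a * (u * v) = (a * v) * u := by ring
          rw [he]; exact hpmul _ (G.mul_mem_11 ha hv) u hu) x hx
      set J := G.mkIdeal p Npr hp0 hNpr1 hpmul h0Npr h1pr h1Npr with hJdef
      have hJQ : J ≤ Q := by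
        rintro x ⟨a, ha, b, hb, rfl⟩
        have haQ : a ∈ Q := (hpmem.1 ha).1
        have hbQ : b ∈ Q := by
          have : Npr ≤ Q.toAddSubgroup := Z2Grading.mulSet_le (fun u hu v hv =>
            Ideal.mul_mem_right _ _ (hpmem.1 hu).1)
          exact this hb
        exact Q.add_mem haQ hbQ
      have hJmax : G.IsGradedMaximal J := G.gradedMaximal_of_case2 J hpm hsq rfl
      rcases hJmax.2.2 Q hgr hJQ with h | h
      · rw [h]; rfl
      · exact absurd h hne
  · rintro (⟨p, hpm, hsq, hQ⟩ | ⟨p, hpm, hsq, hQ⟩)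
    · exact G.gradedMaximal_of_case1 Q hpm hsq hQ
    · exact G.gradedMaximal_of_case2 Q hpm hsq hQ
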